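/- Let ρ ≥ 0, ν ≥ 0, let E : ℝ^d → ℝ be continuous and nonnegative, and fix u⁰, u¹ ∈ ℝ^d. For ε > 0 define the curve v̂_ε : [0,∞) → ℝ^d componentwise by (v̂_ε)_i(t) = u⁰_i + arctan(ε u¹_i t) for i = 1,…,d. Then v̂_ε(0) = u⁰, v̂_ε'(0) = ε u¹, and there exists a constant C > 0, depending only on ρ, ν, E, u⁰, u¹, d, such that for every ε ∈ (0,1] one has ∫_0^∞ e^{-t} ( (ρ/2)|v̂_ε''(t)|² + (εν/2)|v̂_ε'(t)|² + ε² E(v̂_ε(t)) ) dt ≤ C ε². -/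

import Mathlib

open Real MeasureTheory Set


/-- The competitor curve `v̂_ε(t)` with components `u⁰_i + arctan(ε u¹_i t)`. -/
noncomputable def wideCompetitor (d : ℕ) (a b : EuclideanSpace ℝ (Fin d)) (ε : ℝ) :
    ℝ → EuclideanSpace ℝ (Fin d) :=
  fun t => (EuclideanSpace.equiv (Fin d) ℝ).symm fun i => a i + Real.arctan (ε * b i * t)

noncomputable def wc1 (d : ℕ) (b : EuclideanSpace ℝ (Fin d)) (ε : ℝ) :
    ℝ → EuclideanSpace ℝ (Fin d) :=
  fun t => (EuclideanSpace.equiv (Fin d) ℝ).symm fun i =>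
    ε * b i / (1 + (ε * b i * t) ^ 2)

noncomputable def wc2 (d : ℕ) (b : EuclideanSpace ℝ (Fin d)) (ε : ℝ) :
    ℝ → EuclideanSpace ℝ (Fin d) :=
  fun t => (EuclideanSpace.equiv (Fin d) ℝ).symm fun i =>
    -(ε * b i * (2 * (ε * b i * t) * (ε * b i))) / (1 + (ε * b i * t) ^ 2) ^ 2

lemma wcd1 (c t : ℝ) : HasDerivAt (fun s => Real.arctan (c * s)) (c / (1 + (c*t)^2)) t := by
  have h := (Real.hasDerivAt_arctan (c*t)).comp t ((hasDerivAt_id t).const_mul c)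
  simpa [div_eq_mul_inv, mul_comm, Function.comp_def] using h

lemma wcd2 (c t : ℝ) :
    HasDerivAt (fun s => c / (1 + (c*s)^2)) (-(c * (2*(c*t)*c)) / (1+(c*t)^2)^2) t := by
  have hg : (0:ℝ) < 1 + (c*t)^2 := by positivity
  have hgt : HasDerivAt (fun s => 1 + (c*s)^2) (2*(c*t)*c) t := by
    have := (((hasDerivAt_id t).const_mul c).pow 2).const_add 1
    simpa [mul_comm, mul_assoc, mul_left_comm] using this
  have := (hasDerivAt_const t c).div hgt hg.ne'
  simpa [Pi.div_def] using this

lemma hasDerivAt_wc (d : ℕ) (a b : EuclideanSpace ℝ (Fin d)) (ε t : ℝ) :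
    HasDerivAt (wideCompetitor d a b ε) (wc1 d b ε t) t := by
  have hw : HasDerivAt (fun s => fun i : Fin d => a i + Real.arctan (ε * b i * s))
      (fun i => ε * b i / (1 + (ε * b i * t) ^ 2)) t :=
    hasDerivAt_pi.2 fun i => (wcd1 (ε * b i) t).const_add (a i)
  exact (((EuclideanSpace.equiv (Fin d) ℝ).symm :
    (Fin d → ℝ) →L[ℝ] EuclideanSpace ℝ (Fin d)).hasFDerivAt.comp_hasDerivAt t hw)

lemma hasDerivAt_wc1 (d : ℕ) (b : EuclideanSpace ℝ (Fin d)) (ε t : ℝ) :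
    HasDerivAt (wc1 d b ε) (wc2 d b ε t) t := by
  have hw : HasDerivAt (fun s => fun i : Fin d => ε * b i / (1 + (ε * b i * s) ^ 2))
      (fun i => -(ε * b i * (2 * (ε * b i * t) * (ε * b i))) / (1 + (ε * b i * t) ^ 2) ^ 2) t :=
    hasDerivAt_pi.2 fun i => wcd2 (ε * b i) t
  exact (((EuclideanSpace.equiv (Fin d) ℝ).symm :
    (Fin d → ℝ) →L[ℝ] EuclideanSpace ℝ (Fin d)).hasFDerivAt.comp_hasDerivAt t hw)

lemma deriv_wc (d : ℕ) (a b : EuclideanSpace ℝ (Fin d)) (ε : ℝ) :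
    deriv (wideCompetitor d a b ε) = wc1 d b ε :=
  funext fun t => (hasDerivAt_wc d a b ε t).deriv

lemma iteratedDeriv_two_wc (d : ℕ) (a b : EuclideanSpace ℝ (Fin d)) (ε t : ℝ) :
    iteratedDeriv 2 (wideCompetitor d a b ε) t = wc2 d b ε t := by
  rw [show (2:ℕ) = 1 + 1 from rfl, iteratedDeriv_succ, iteratedDeriv_one, deriv_wc]
  exact (hasDerivAt_wc1 d b ε t).deriv

lemma euclid_norm_le {d : ℕ} (y M : Fin d → ℝ) (r : ℝ) (hr : 0 ≤ r)
    (h : ∀ i, |y i| ≤ r * |M i|) :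
    ‖(EuclideanSpace.equiv (Fin d) ℝ).symm y‖ ≤
      r * ‖(EuclideanSpace.equiv (Fin d) ℝ).symm M‖ := by
  rw [EuclideanSpace.norm_eq, EuclideanSpace.norm_eq]
  have key : ∀ i, ‖((EuclideanSpace.equiv (Fin d) ℝ).symm y) i‖ ^ 2 ≤
      r^2 * ‖((EuclideanSpace.equiv (Fin d) ℝ).symm M) i‖ ^ 2 := by
    intro i
    have := h i
    show |y i| ^ 2 ≤ r ^ 2 * |M i| ^ 2
    nlinarith [abs_nonneg (y i), abs_nonneg (M i)]
  calc √(∑ i, ‖((EuclideanSpace.equiv (Fin d) ℝ).symm y) i‖ ^ 2)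
      ≤ √(∑ i, r^2 * ‖((EuclideanSpace.equiv (Fin d) ℝ).symm M) i‖ ^ 2) :=
        Real.sqrt_le_sqrt (Finset.sum_le_sum fun i _ => key i)
    _ = r * √(∑ i, ‖((EuclideanSpace.equiv (Fin d) ℝ).symm M) i‖ ^ 2) := by
        rw [← Finset.mul_sum, Real.sqrt_mul (by positivity), Real.sqrt_sq hr]

lemma bnd1 (c x : ℝ) : |c / (1 + x ^ 2)| ≤ |c| := by
  rw [abs_div, abs_of_pos (by positivity : (0:ℝ) < 1 + x ^ 2),
    div_le_iff₀ (by positivity)]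
  nlinarith [abs_nonneg c, sq_nonneg x]

lemma bnd2 (c x : ℝ) : |(-(c * (2 * x * c))) / (1 + x ^ 2) ^ 2| ≤ c ^ 2 := by
  rw [abs_div, abs_of_pos (by positivity : (0:ℝ) < (1 + x ^ 2) ^ 2),
    div_le_iff₀ (by positivity)]
  have h : |(-(c * (2 * x * c)))| = 2 * c ^ 2 * |x| := by
    rw [abs_neg, abs_mul, abs_mul, abs_mul, ← sq_abs c,
      abs_of_nonneg (by norm_num : (0:ℝ) ≤ 2)]
    ring
  rw [h]
  nlinarith [sq_nonneg (1 - |x|), sq_abs x, sq_nonneg c, abs_nonneg x,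
    mul_nonneg (sq_nonneg c) (sq_nonneg x)]

/-- competitor estimate in the Serra–Tilli argument. Let `ρ ≥ 0`,
`ν ≥ 0`, `E : ℝ^d → ℝ` continuous and nonnegative, and `a = u⁰`, `b = u¹ ∈ ℝ^d`. The
curves `v̂_ε` satisfy `v̂_ε(0) = u⁰`, `v̂_ε'(0) = ε u¹`, and there is `C > 0` (depending
only on the data) such that for every `ε ∈ (0,1]`,
`∫_0^∞ e^{-t} ((ρ/2)|v̂_ε''|² + (εν/2)|v̂_ε'|² + ε² E(v̂_ε)) dt ≤ C ε²`. -/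
theorem wide_competitor_estimate (d : ℕ) (ρ ν : ℝ) (hρ : 0 ≤ ρ) (hν : 0 ≤ ν)
    (E : EuclideanSpace ℝ (Fin d) → ℝ) (hEc : Continuous E) (hEnn : ∀ x, 0 ≤ E x)
    (a b : EuclideanSpace ℝ (Fin d)) :
    (∀ ε : ℝ, wideCompetitor d a b ε 0 = a)
      ∧ (∀ ε : ℝ, deriv (wideCompetitor d a b ε) 0 = ε • b)
      ∧ ∃ C > (0 : ℝ), ∀ ε ∈ Set.Ioc (0 : ℝ) 1,
          (∫⁻ t in Set.Ioi (0 : ℝ), ENNReal.ofReal (Real.exp (-t) *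
              ((ρ / 2) * ‖iteratedDeriv 2 (wideCompetitor d a b ε) t‖ ^ 2
                + (ε * ν / 2) * ‖deriv (wideCompetitor d a b ε) t‖ ^ 2
                + ε ^ 2 * E (wideCompetitor d a b ε t))))
            ≤ ENNReal.ofReal (C * ε ^ 2) := by
  refine ⟨?_, ?_, ?_⟩
  · intro ε
    ext i
    show a i + Real.arctan (ε * b i * 0) = a i
    simp
  · intro ε
    rw [deriv_wc]
    ext i
    show ε * b i / (1 + (ε * b i * 0) ^ 2) = (ε • b) i
    simp
  · -- constants
    set B1 : ℝ := ‖b‖ with hB1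
    set B2 : ℝ := ‖(EuclideanSpace.equiv (Fin d) ℝ).symm (fun i => (b i) ^ 2)‖ with hB2
    set R : ℝ := (π / 2) * ‖(EuclideanSpace.equiv (Fin d) ℝ).symm (fun _ : Fin d => (1:ℝ))‖
      with hR
    have hR0 : 0 ≤ R := by
      have := norm_nonneg ((EuclideanSpace.equiv (Fin d) ℝ).symm (fun _ : Fin d => (1:ℝ)))
      have hπ := Real.pi_pos
      positivity
    obtain ⟨x₀, -, hx₀⟩ := (isCompact_closedBall a R).exists_isMaxOn
      ⟨a, Metric.mem_closedBall_self hR0⟩ hEc.continuousOn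
    set K : ℝ := E x₀ with hK
    have hK0 : 0 ≤ K := hEnn x₀
    refine ⟨ρ / 2 * B2 ^ 2 + ν / 2 * B1 ^ 2 + K + 1, by positivity, ?_⟩
    rintro ε ⟨hε0, hε1⟩
    -- pointwise bounds
    have hV1 : ∀ t : ℝ, ‖wc1 d b ε t‖ ≤ ε * B1 := by
      intro t
      have := euclid_norm_le (fun i => ε * b i / (1 + (ε * b i * t) ^ 2))
        (fun i => b i) |ε| (abs_nonneg ε) (fun i => by
          have := bnd1 (ε * b i) (ε * b i * t)
          simpa [abs_mul] using this)
      rw [abs_of_pos hε0] at this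
      exact this
    have hV2 : ∀ t : ℝ, ‖wc2 d b ε t‖ ≤ ε ^ 2 * B2 := by
      intro t
      refine euclid_norm_le _ (fun i => (b i) ^ 2) (ε ^ 2) (sq_nonneg ε) (fun i => ?_)
      have h := bnd2 (ε * b i) (ε * b i * t)
      calc |(-(ε * b i * (2 * (ε * b i * t) * (ε * b i))) / (1 + (ε * b i * t) ^ 2) ^ 2)|
          ≤ (ε * b i) ^ 2 := h
        _ = ε ^ 2 * |(b i) ^ 2| := by rw [abs_of_nonneg (sq_nonneg _)]; ring
    have hVmem : ∀ t : ℝ, wideCompetitor d a b ε t ∈ Metric.closedBall a R := by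
      intro t
      rw [Metric.mem_closedBall, dist_eq_norm]
      have hsub : wideCompetitor d a b ε t - a =
          (EuclideanSpace.equiv (Fin d) ℝ).symm (fun i => Real.arctan (ε * b i * t)) := by
        ext i
        show (wideCompetitor d a b ε t) i - a i = Real.arctan (ε * b i * t)
        show a i + Real.arctan (ε * b i * t) - a i = Real.arctan (ε * b i * t)
        ring
      rw [hsub]
      refine euclid_norm_le _ (fun _ => (1:ℝ)) (π / 2)
        (by have := Real.pi_pos; positivity) (fun i => ?_)
      rw [abs_one, mul_one]
      exact abs_le.2 ⟨(Real.neg_pi_div_two_lt_arctan _).le,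
        (Real.arctan_lt_pi_div_two _).le⟩
    have hEbd : ∀ t : ℝ, E (wideCompetitor d a b ε t) ≤ K := fun t => hx₀ (hVmem t)
    set C : ℝ := ρ / 2 * B2 ^ 2 + ν / 2 * B1 ^ 2 + K + 1 with hC
    have hpt : ∀ t : ℝ,
        Real.exp (-t) * ((ρ / 2) * ‖iteratedDeriv 2 (wideCompetitor d a b ε) t‖ ^ 2
          + (ε * ν / 2) * ‖deriv (wideCompetitor d a b ε) t‖ ^ 2
          + ε ^ 2 * E (wideCompetitor d a b ε t))
        ≤ Real.exp (-t) * (C * ε ^ 2) := by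
      intro t
      refine mul_le_mul_of_nonneg_left ?_ (Real.exp_nonneg _)
      rw [iteratedDeriv_two_wc, deriv_wc]
      have h2 : ‖wc2 d b ε t‖ ^ 2 ≤ (ε ^ 2 * B2) ^ 2 :=
        pow_le_pow_left₀ (norm_nonneg _) (hV2 t) 2
      have h1 : ‖wc1 d b ε t‖ ^ 2 ≤ (ε * B1) ^ 2 :=
        pow_le_pow_left₀ (norm_nonneg _) (hV1 t) 2
      have hE := hEbd t
      have hB10 : 0 ≤ B1 := norm_nonneg _
      have hB20 : 0 ≤ B2 := norm_nonneg _
      have hEt0 : 0 ≤ E (wideCompetitor d a b ε t) := hEnn _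
      rw [hC]
      nlinarith [mul_le_mul_of_nonneg_left h2 (by linarith : (0:ℝ) ≤ ρ / 2),
        mul_le_mul_of_nonneg_left h1 (by positivity : (0:ℝ) ≤ ε * ν / 2),
        mul_le_mul_of_nonneg_left hE (sq_nonneg ε),
        mul_nonneg (mul_nonneg hρ (sq_nonneg B2)) (mul_nonneg (sq_nonneg ε)
          (by nlinarith : (0:ℝ) ≤ 1 - ε ^ 2)),
        mul_nonneg (mul_nonneg hν (sq_nonneg B1)) (mul_nonneg (sq_nonneg ε)
          (by nlinarith : (0:ℝ) ≤ 1 - ε))]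
    calc (∫⁻ t in Set.Ioi (0 : ℝ), ENNReal.ofReal (Real.exp (-t) *
              ((ρ / 2) * ‖iteratedDeriv 2 (wideCompetitor d a b ε) t‖ ^ 2
                + (ε * ν / 2) * ‖deriv (wideCompetitor d a b ε) t‖ ^ 2
                + ε ^ 2 * E (wideCompetitor d a b ε t))))
        ≤ ∫⁻ t in Set.Ioi (0 : ℝ), ENNReal.ofReal (Real.exp (-t) * (C * ε ^ 2)) :=
          lintegral_mono fun t => ENNReal.ofReal_le_ofReal (hpt t)
      _ = ∫⁻ t in Set.Ioi (0 : ℝ),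
            ENNReal.ofReal (C * ε ^ 2) * ENNReal.ofReal (Real.exp (-t)) := by
          congr 1; funext t
          rw [← ENNReal.ofReal_mul (by positivity), mul_comm]
      _ = ENNReal.ofReal (C * ε ^ 2) *
            ∫⁻ t in Set.Ioi (0 : ℝ), ENNReal.ofReal (Real.exp (-t)) :=
          lintegral_const_mul' _ _ ENNReal.ofReal_ne_top
      _ = ENNReal.ofReal (C * ε ^ 2) := by
          have hint : IntegrableOn (fun x : ℝ => Real.exp (-x)) (Set.Ioi 0) := by
            simpa using exp_neg_integrableOn_Ioi 0 one_pos
          rw [← ofReal_integral_eq_lintegral_ofReal hint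
            (Filter.Eventually.of_forall fun x => (Real.exp_pos _).le),
            integral_exp_neg_Ioi_zero]
          simp
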